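/- (Erdős cardinal implies free subsets) Let λ be an infinite cardinal and κ a cardinal satisfying the partition relation κ → (ω)_λ^{<ω}. Then every algebra with underlying set of cardinality κ and signature of size at most λ has an infinite free subset; in particular no such algebra is Artinian. -/

import Mathlib

universe u

structure Alg (ι : Type u) (M : Type u) where
  arity : ι → ℕ
  op : (i : ι) → (Fin (arity i) → M) → M

namespace Alg

variable {ι M : Type u}

/-- A set is closed under all operations of the algebra. -/
def Closed (A : Alg ι M) (S : Set M) : Prop :=
  ∀ (i : ι) (x : Fin (A.arity i) → M), (∀ k, x k ∈ S) → A.op i x ∈ S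

/-- Membership in the subalgebra generated by `X`. -/
inductive cl (A : Alg ι M) (X : Set M) : M → Prop
  | base {m : M} (h : m ∈ X) : cl A X m
  | op (i : ι) (x : Fin (A.arity i) → M) (h : ∀ k, cl A X (x k)) : cl A X (A.op i x)

/-- A subset is free if no element lies in the subalgebra generated by the others. -/
def Free (A : Alg ι M) (X : Set M) : Prop :=
  ∀ x ∈ X, ¬ A.cl (X \ {x}) x

/-- An algebra is Artinian if there is no infinite strictly descending chain of
(nonempty closed) subalgebras. -/
def Artinian (A : Alg ι M) : Prop :=
  ¬ ∃ S : ℕ → Set M, (∀ n, (S n).Nonempty ∧ A.Closed (S n)) ∧ ∀ n, S (n + 1) ⊂ S n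

end Alg

open Cardinal

/-! ### Auxiliary machinery: terms, evaluation, variables -/

namespace Alg

variable {ι M : Type u} (A : Alg ι M)

/-- The branching signature for the `W`-type of terms of the algebra. -/
def Sig : ULift.{u} ℕ ⊕ ι → Type u
  | Sum.inl _ => PEmpty
  | Sum.inr i => ULift (Fin (A.arity i))

instance (x : ULift.{u} ℕ ⊕ ι) : Finite (A.Sig x) := by
  cases x <;> dsimp [Sig] <;> infer_instance

/-- Terms of the algebra with variables indexed by `ℕ`. -/
abbrev Tm := WType A.Sig

/-- Evaluation of a term under a valuation of the variables. -/
def eval : A.Tm → (ℕ → M) → M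
  | ⟨Sum.inl n, _⟩, v => v n.down
  | ⟨Sum.inr i, c⟩, v => A.op i fun k => eval (c ⟨k⟩) v

/-- The (finite) set of variables occurring in a term. -/
def vars : A.Tm → Finset ℕ
  | ⟨Sum.inl n, _⟩ => {n.down}
  | ⟨Sum.inr i, c⟩ => Finset.univ.sup fun k : Fin (A.arity i) => vars (c ⟨k⟩)

/-- Renaming of the variables of a term. -/
def rename (σ : ℕ → ℕ) : A.Tm → A.Tm
  | ⟨Sum.inl n, f⟩ => ⟨Sum.inl ⟨σ n.down⟩, f⟩
  | ⟨Sum.inr i, c⟩ => ⟨Sum.inr i, fun k => rename σ (c k)⟩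

theorem eval_congr {t : A.Tm} {v w : ℕ → M} (h : ∀ j ∈ A.vars t, v j = w j) :
    A.eval t v = A.eval t w := by
  induction t with
  | mk a c ih =>
    match a, c, ih with
    | Sum.inl n, c, ih => exact h n.down (by simp [vars])
    | Sum.inr i, c, ih =>
      exact congrArg (A.op i) (funext fun k =>
        ih ⟨k⟩ fun j hj => h j (Finset.mem_of_subset (Finset.le_sup (Finset.mem_univ k)) hj))

theorem eval_rename (σ : ℕ → ℕ) (t : A.Tm) (v : ℕ → M) :
    A.eval (A.rename σ t) v = A.eval t (fun j => v (σ j)) := by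
  induction t with
  | mk a c ih =>
    match a, c, ih with
    | Sum.inl n, c, ih => rfl
    | Sum.inr i, c, ih =>
      exact congrArg (A.op i) (funext fun k => ih ⟨k⟩)

theorem vars_rename (σ : ℕ → ℕ) (t : A.Tm) :
    A.vars (A.rename σ t) ⊆ (A.vars t).image σ := by
  induction t with
  | mk a c ih =>
    match a, c, ih with
    | Sum.inl n, c, ih => simp [vars, rename]
    | Sum.inr i, c, ih =>
      intro j hj
      simp only [vars, rename, Finset.mem_sup, Finset.mem_univ, true_and] at hj
      obtain ⟨k, hk⟩ := hj
      obtain ⟨j', hj', rfl⟩ := Finset.mem_image.mp (ih ⟨k⟩ hk)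
      exact Finset.mem_image.mpr ⟨j', Finset.mem_of_subset
        (Finset.le_sup (f := fun k : Fin (A.arity i) => A.vars (c ⟨k⟩)) (Finset.mem_univ k)) hj', rfl⟩

theorem card_tm (lam : Cardinal.{u}) (hlam : ℵ₀ ≤ lam) (hι : #ι ≤ lam) :
    Cardinal.mk A.Tm ≤ lam := by
  refine (WType.cardinalMk_le_max_aleph0_of_finite).trans ?_
  apply max_le _ hlam
  simp only [Cardinal.mk_sum, Cardinal.mk_uLift, Cardinal.mk_nat, Cardinal.lift_id]
  exact Cardinal.add_le_of_le hlam (by simpa using hlam) hι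

theorem cl_mono {X Y : Set M} (h : X ⊆ Y) {m : M} (hm : A.cl X m) : A.cl Y m := by
  induction hm with
  | base h' => exact cl.base (h h')
  | op i x _ ih => exact cl.op i x ih

theorem cl_repr {Y : Set M} (hY : Y.Nonempty) {m : M} (hm : A.cl Y m) :
    ∃ (t : A.Tm) (v : ℕ → M), (∀ j, v j ∈ Y) ∧ A.eval t v = m := by
  obtain ⟨y₀, hy₀⟩ := hY
  induction hm with
  | base h =>
    exact ⟨⟨Sum.inl ⟨0⟩, fun e => PEmpty.elim e⟩, fun _ => _, fun _ => h, rfl⟩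
  | op i x hk ih =>
    choose t v hv he using ih
    refine ⟨⟨Sum.inr i, fun k => A.rename (fun j => Nat.pair k.down.val j) (t k.down)⟩,
      fun n => if h : (Nat.unpair n).1 < A.arity i then v ⟨(Nat.unpair n).1, h⟩ (Nat.unpair n).2
        else y₀, ?_, ?_⟩
    · intro j
      dsimp only
      split
      · exact hv _ _
      · exact hy₀
    · show A.op i _ = A.op i x
      refine congrArg (A.op i) (funext fun k => ?_)
      rw [A.eval_rename]
      rw [show (fun j => (if h : (Nat.unpair (Nat.pair k.val j)).1 < A.arity i then
          v ⟨(Nat.unpair (Nat.pair k.val j)).1, h⟩ (Nat.unpair (Nat.pair k.val j)).2 else y₀))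
          = v k from funext fun j => by simp [Nat.unpair_pair]]
      exact he k

end Alg

/-- Sorting a finset commutes with taking the image under a strictly monotone map. -/
theorem sort_image_strictMono {α β : Type*} [LinearOrder α] [LinearOrder β] (F : Finset α)
    {g : α → β} (hg : StrictMono g) :
    (F.image g).sort (· ≤ ·) = (F.sort (· ≤ ·)).map g := by
  refine (fun hp h2 => List.Perm.eq_of_pairwise' (Finset.pairwise_sort (F.image g) (· ≤ ·)) h2 hp) ?_ ?_
  · rw [← Multiset.coe_eq_coe, Finset.sort_eq]
    calc (F.image g).val = Multiset.map g F.val :=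
          Finset.image_val_of_injOn hg.injective.injOn
      _ = Multiset.map g ↑(F.sort (· ≤ ·)) := by rw [Finset.sort_eq]
      _ = ↑((F.sort (· ≤ ·)).map g) := Multiset.map_coe g _
  · exact List.Pairwise.map g (fun a b h => hg.monotone h) (Finset.pairwise_sort _ _)

section Main

namespace Alg

variable {ι M : Type u} (A : Alg ι M)

variable {O : Type u} [LinearOrder O]

end Alg

/-- Valuation reading off the sorted elements of a finset (transported by `e`). -/
noncomputable def valsF {O M : Type*} [LinearOrder O] (e : O → M) (m₀ : M) (s : Finset O) : ℕ → M :=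
  fun j => ((s.sort (· ≤ ·)).map e).getD j m₀

namespace Alg

variable {ι M : Type u} (A : Alg ι M) {O : Type u} [LinearOrder O]

/-- The predicate underlying the coloring: the pair `(t, p)` witnesses that the `p`-th
element of `s` is generated by the other elements of `s`. -/
def PP (e : O → M) (m₀ : M) (s : Finset O) (tp : A.Tm × ULift.{u} ℕ) : Prop :=
  tp.2.down < s.card ∧
  (∀ v w : ℕ → M, (∀ j, j ≠ tp.2.down → v j = w j) → A.eval tp.1 v = A.eval tp.1 w) ∧
  A.eval tp.1 (valsF e m₀ s) = valsF e m₀ s tp.2.down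

open Classical in
/-- The coloring. -/
noncomputable def FF (e : O → M) (m₀ : M) (s : Finset O) : Option (A.Tm × ULift.{u} ℕ) :=
  if h : ∃ tp, A.PP e m₀ s tp then some h.choose else none

theorem FF_eq_some {e : O → M} {m₀ : M} {s : Finset O} {tp : A.Tm × ULift.{u} ℕ}
    (h : A.FF e m₀ s = some tp) : A.PP e m₀ s tp := by
  unfold FF at h
  split at h
  · rename_i h'
    cases h
    exact h'.choose_spec
  · cases h

theorem free_of_hom (e : O ≃ M) (m₀ : M) (a : ℕ → O) (ha : StrictMono a)
    (hhom : ∀ s t : Finset O, ↑s ⊆ Set.range a → ↑t ⊆ Set.range a → s.card = t.card →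
      A.FF e m₀ s = A.FF e m₀ t) :
    A.Free (Set.range fun j => e (a j)) := by
  classical
  set x : ℕ → M := fun j => e (a j) with hxdef
  have hx : Function.Injective x := fun i j h => ha.injective (e.injective h)
  intro m hm hcl
  obtain ⟨J, rfl⟩ := hm
  have hYne : (Set.range x \ {x J}).Nonempty :=
    ⟨x (J + 1), ⟨J + 1, rfl⟩, by simp [Set.mem_singleton_iff, hx.eq_iff]⟩
  obtain ⟨t, v, hv, hev⟩ := A.cl_repr hYne hcl
  have hvr : ∀ j, ∃ k, x k = v j := fun j => (hv j).1
  choose g hg using hvr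
  have hgJ : ∀ j, g j ≠ J := by
    intro j h
    exact (hv j).2 (by rw [← hg j, h]; exact Set.mem_singleton _)
  set F : Finset ℕ := insert J ((A.vars t).image g) with hF
  set lF : List ℕ := F.sort (· ≤ ·) with hlF
  have hJF : J ∈ F := Finset.mem_insert_self _ _
  have hmemF : ∀ w ∈ F, w ∈ lF := fun w hw => (Finset.mem_sort _).mpr hw
  have hidxlt : ∀ w ∈ F, lF.idxOf w < lF.length :=
    fun w hw => List.idxOf_lt_length_iff.mpr (hmemF w hw)
  have hidxget : ∀ w (hw : w ∈ F), lF[lF.idxOf w]'(hidxlt w hw) = w :=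
    fun w hw => List.getElem_idxOf (hidxlt w hw)
  have hgetD : ∀ w (hw : w ∈ F), lF.getD (lF.idxOf w) 0 = w := fun w hw => by
    rw [List.getD_eq_getElem _ _ (hidxlt w hw)]
    exact hidxget w hw
  set s : Finset O := F.image a with hs
  have hsort : s.sort (· ≤ ·) = lF.map a := sort_image_strictMono F ha
  have hvalsF : ∀ w (hw : w ∈ F), valsF e m₀ s (lF.idxOf w) = x w := by
    intro w hw
    unfold valsF
    rw [hsort, List.map_map, List.getD_eq_getElem _ _ (by simpa using hidxlt w hw)]
    simp only [List.getElem_map, Function.comp_apply]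
    rw [hidxget w hw]
  have hPs : A.PP e m₀ s (A.rename (fun j => lF.idxOf (g j)) t, ⟨lF.idxOf J⟩) := by
    refine ⟨?_, ?_, ?_⟩
    · show lF.idxOf J < s.card
      rw [hs, Finset.card_image_of_injective _ ha.injective,
        ← Finset.length_sort (α := ℕ) (· ≤ ·)]
      exact hidxlt J hJF
    · intro v' w' hvw
      apply A.eval_congr
      intro j hj
      apply hvw
      obtain ⟨j', hj', rfl⟩ := Finset.mem_image.mp (A.vars_rename _ t hj)
      intro hEq
      apply hgJ j'
      have hgF : g j' ∈ F := Finset.mem_insert_of_mem (Finset.mem_image_of_mem g hj')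
      rw [← hgetD _ hgF, hEq, hgetD _ hJF]
    · show A.eval (A.rename (fun j => lF.idxOf (g j)) t) (valsF e m₀ s)
        = valsF e m₀ s (lF.idxOf J)
      rw [A.eval_rename]
      have heq : A.eval t (fun j => valsF e m₀ s (lF.idxOf (g j))) = A.eval t v := by
        apply A.eval_congr
        intro j hj
        rw [hvalsF _ (Finset.mem_insert_of_mem (Finset.mem_image_of_mem g hj)), hg j]
      rw [heq, hev, ← hvalsF J hJF]
  have hex : ∃ tp, A.PP e m₀ s tp := ⟨_, hPs⟩
  have hfs : A.FF e m₀ s = some hex.choose := by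
    unfold FF
    rw [dif_pos hex]
  have hspec := hex.choose_spec
  set t₀ := hex.choose.1 with ht₀
  set q : ℕ := hex.choose.2.down with hqdef
  set n := s.card with hn
  have hsubr : ∀ F' : Finset ℕ, ↑(F'.image a) ⊆ Set.range a := by
    intro F' o ho
    obtain ⟨k, -, rfl⟩ := Finset.mem_image.mp ho
    exact ⟨k, rfl⟩
  have key : ∀ h' : ℕ → ℕ, StrictMono h' →
      A.eval t₀ (valsF e m₀ (((Finset.range n).image h').image a)) = x (h' q) ∧
      (∀ j, valsF e m₀ (((Finset.range n).image h').image a) j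
        = if j < n then x (h' j) else m₀) := by
    intro h' hmono
    have hcard : (((Finset.range n).image h').image a).card = n := by
      rw [Finset.card_image_of_injective _ ha.injective,
        Finset.card_image_of_injective _ hmono.injective, Finset.card_range]
    have hvals' : ∀ j, valsF e m₀ (((Finset.range n).image h').image a) j
        = if j < n then x (h' j) else m₀ := by
      intro j
      unfold valsF
      rw [sort_image_strictMono _ ha, sort_image_strictMono _ hmono, Finset.sort_range,
        List.map_map, List.map_map]
      by_cases hj : j < n
      · rw [List.getD_eq_getElem _ _ (by simpa using hj), if_pos hj]
        simp [hxdef]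
      · rw [List.getD_eq_default _ _ (by simpa using Nat.le_of_not_lt hj), if_neg hj]
    have hFF := hhom _ s (hsubr _) (hsubr F) (by rw [hcard])
    rw [hfs] at hFF
    have hP := A.FF_eq_some hFF
    have hqn : q < n := by
      have := hP.1
      rwa [hcard] at this
    refine ⟨?_, hvals'⟩
    calc A.eval t₀ (valsF e m₀ (((Finset.range n).image h').image a))
        = valsF e m₀ (((Finset.range n).image h').image a) q := hP.2.2
      _ = x (h' q) := by rw [hvals' q, if_pos hqn]
  obtain ⟨h1eval, h1vals⟩ := key (fun j => 2 * j) (fun i j hij => by dsimp only; omega)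
  obtain ⟨h2eval, h2vals⟩ := key (fun j => if j = q then 2 * j + 1 else 2 * j)
    (fun i j hij => by dsimp only; split <;> split <;> omega)
  have hagree := hspec.2.1 (valsF e m₀ (((Finset.range n).image (fun j => 2 * j)).image a))
    (valsF e m₀ (((Finset.range n).image (fun j => if j = q then 2 * j + 1 else 2 * j)).image a))
    (fun j hj => by
      rw [h1vals j, h2vals j]
      by_cases hjn : j < n
      · rw [if_pos hjn, if_pos hjn, if_neg hj]
      · rw [if_neg hjn, if_neg hjn])
  rw [h1eval, h2eval] at hagree
  have h2q := hx hagree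
  rw [if_pos rfl] at h2q
  omega

theorem not_artinian_of_free (X : Set M) (hX : X.Infinite) (hfr : A.Free X) : ¬ A.Artinian := by
  intro hart
  apply hart
  set x : ℕ → M := fun n => (Set.Infinite.natEmbedding X hX n).1 with hxdef
  have hx : Function.Injective x := fun i j h =>
    (Set.Infinite.natEmbedding X hX).injective (Subtype.coe_injective h)
  have hxX : ∀ n, x n ∈ X := fun n => (Set.Infinite.natEmbedding X hX n).2
  refine ⟨fun n => {m | A.cl (x '' {k | n ≤ k}) m},
    fun n => ⟨⟨x n, Alg.cl.base ⟨n, le_refl n, rfl⟩⟩, fun i y hy => Alg.cl.op i y hy⟩, ?_⟩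
  intro n
  rw [Set.ssubset_def]
  constructor
  · intro m hm
    exact A.cl_mono (Set.image_mono (f := x) (fun k hk => le_trans (Nat.le_succ n) hk)) hm
  · intro hcontra
    have h1 : A.cl (x '' {k | n ≤ k}) (x n) := Alg.cl.base ⟨n, le_refl n, rfl⟩
    have h2 : A.cl (x '' {k | n + 1 ≤ k}) (x n) := hcontra h1
    have h3 : x '' {k | n + 1 ≤ k} ⊆ X \ {x n} := by
      rintro _ ⟨k, hk, rfl⟩
      refine ⟨hxX k, fun hEq => ?_⟩
      have hkn := hx (Set.mem_singleton_iff.mp hEq)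
      simp only [Set.mem_setOf_eq] at hk
      omega
    exact hfr (x n) (hxX n) (A.cl_mono h3 h2)

end Alg

end Main

/-- Erdős cardinal implies free subsets: If λ is infinite and the
partition relation κ → (ω)_λ^{<ω} holds — every coloring of the finite subsets of a
set of size κ (carried by the order `κ.ord.ToType`) with at most λ colors has an
infinite strictly increasing homogeneous-in-each-cardinality sequence — then every
algebra of cardinality κ with signature of size at most λ has an infinite free
subset, and in particular is not Artinian. -/
theorem stmt14 (lam κ : Cardinal.{u}) (hlam : ℵ₀ ≤ lam)
    (hpart : ∀ (L : Type u), #L ≤ lam → ∀ f : Finset κ.ord.ToType → L,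
      ∃ a : ℕ → κ.ord.ToType, StrictMono a ∧
        ∀ s t : Finset κ.ord.ToType, ↑s ⊆ Set.range a → ↑t ⊆ Set.range a →
          s.card = t.card → f s = f t) :
    ∀ (ι M : Type u) (A : Alg ι M), #ι ≤ lam → #M = κ →
      (∃ X : Set M, X.Infinite ∧ A.Free X) ∧ ¬ A.Artinian := by
  intro ι M A hι hM
  have hne : Nonempty κ.ord.ToType := by
    obtain ⟨a, -, -⟩ := hpart PUnit
      (by rw [Cardinal.mk_punit]; exact le_trans (le_of_lt Cardinal.one_lt_aleph0) hlam)
      (fun _ => PUnit.unit)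
    exact ⟨a 0⟩
  have hOM : #κ.ord.ToType = #M := by rw [Cardinal.mk_toType, Cardinal.card_ord, hM]
  obtain ⟨e⟩ := Cardinal.eq.mp hOM
  obtain ⟨o₀⟩ := hne
  have hL : #(Option (A.Tm × ULift.{u} ℕ)) ≤ lam := by
    have h1 : #A.Tm ≤ lam := A.card_tm lam hlam hι
    have h2 : #(ULift.{u} ℕ) = ℵ₀ := by simp
    rw [Cardinal.mk_option, Cardinal.mk_prod, Cardinal.lift_id, Cardinal.lift_id, h2]
    refine Cardinal.add_le_of_le hlam ?_ (le_trans (le_of_lt Cardinal.one_lt_aleph0) hlam)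
    calc #A.Tm * ℵ₀ ≤ lam * lam := mul_le_mul' h1 hlam
      _ = lam := Cardinal.mul_eq_self hlam
  obtain ⟨a, ha, hhom⟩ := hpart (Option (A.Tm × ULift.{u} ℕ)) hL (A.FF e (e o₀))
  have hfree := A.free_of_hom e (e o₀) a ha hhom
  have hx : Function.Injective (fun j => e (a j)) := fun i j h =>
    ha.injective (e.injective h)
  have hinf : (Set.range fun j => e (a j)).Infinite := Set.infinite_range_of_injective hx
  exact ⟨⟨Set.range fun j => e (a j), hinf, hfree⟩,
    A.not_artinian_of_free _ hinf hfree⟩
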